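/- Let C ⊆ F_q^n be a k-dimensional F_q-linear code (1 ≤ k < n), let K be a finite field of characteristic p with q^k elements, let κ : K → Hom_{F_p}(C, F_p) be an F_p-linear isomorphism, write f_λ = κ(λ), and let D ⊆ K^m be an s-dimensional K-linear code (1 ≤ s < m). Then span_ℂ{Φ_Λ : Λ ∈ D} equals the set of all v : (F_q^n)^m → ℂ such that X(c_1,…,c_m)Z(d_1,…,d_m)v = v for every (c_1,…,c_m) ∈ ⋂_{Λ∈D} ker(F_Λ) and every d_1,…,d_m ∈ C^⊥. In particular, the quantum code span_ℂ{Φ_Λ : Λ ∈ D} is a stabilizer code. -/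

import Mathlib

open Matrix

attribute [local instance] Classical.propDecidable

set_option linter.unusedSectionVars false
set_option maxHeartbeats 1000000

/-- `ω^a` where `ω = exp(2πi/p)` and `a : ZMod p`. -/
noncomputable def omg (p : ℕ) (a : ZMod p) : ℂ :=
  Complex.exp (2 * Real.pi * Complex.I * (a.val : ℂ) / (p : ℂ))

section OmgAux
variable (p : ℕ) [Fact p.Prime]

lemma omg_eq_pow (a : ZMod p) :
    omg p a = Complex.exp (2 * Real.pi * Complex.I / (p : ℂ)) ^ a.val := by
  rw [omg, ← Complex.exp_nat_mul]
  congr 1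
  ring

lemma omg_prim : IsPrimitiveRoot (Complex.exp (2 * Real.pi * Complex.I / (p : ℂ))) p :=
  Complex.isPrimitiveRoot_exp p (Fact.out : p.Prime).ne_zero

lemma omg_zero : omg p (0 : ZMod p) = 1 := by
  simp [omg_eq_pow]

lemma omg_add (a b : ZMod p) : omg p (a + b) = omg p a * omg p b := by
  haveI : NeZero p := ⟨(Fact.out : p.Prime).ne_zero⟩
  set z := Complex.exp (2 * Real.pi * Complex.I / (p : ℂ)) with hz
  have hzp : z ^ p = 1 := (omg_prim p).pow_eq_one
  rw [omg_eq_pow, omg_eq_pow, omg_eq_pow, ← pow_add, ZMod.val_add]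
  conv_rhs => rw [← Nat.div_add_mod (a.val + b.val) p]
  rw [pow_add, pow_mul, hzp, one_pow, one_mul]

lemma omg_eq_one_iff (a : ZMod p) : omg p a = 1 ↔ a = 0 := by
  haveI : NeZero p := ⟨(Fact.out : p.Prime).ne_zero⟩
  rw [omg_eq_pow]
  constructor
  · intro h
    have hdvd := ((omg_prim p).pow_eq_one_iff_dvd a.val).mp h
    have hlt : a.val < p := ZMod.val_lt a
    have : a.val = 0 := Nat.eq_zero_of_dvd_of_lt hdvd hlt
    exact (ZMod.val_eq_zero a).mp this
  · rintro rfl; simp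

lemma omg_sum {ι : Type*} (s : Finset ι) (f : ι → ZMod p) :
    omg p (∑ i ∈ s, f i) = ∏ i ∈ s, omg p (f i) := by
  classical
  induction s using Finset.cons_induction with
  | empty => simp [omg_zero]
  | cons i s hi ih => rw [Finset.sum_cons, Finset.prod_cons, omg_add, ih]

lemma sum_omg_eq_zero {V : Type*} [Fintype V] [AddCommGroup V]
    (f : V → ZMod p) (hadd : ∀ a b, f (a + b) = f a + f b) (v0 : V) (h0 : f v0 ≠ 0) :
    ∑ v : V, omg p (f v) = 0 := by
  have key : ∑ v : V, omg p (f v) = omg p (f v0) * ∑ v : V, omg p (f v) := by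
    conv_lhs => rw [← Equiv.sum_comp (Equiv.addRight v0) (fun v => omg p (f v))]
    rw [Finset.mul_sum]
    refine Finset.sum_congr rfl fun v _ => ?_
    simp only [Equiv.coe_addRight, hadd, omg_add]
    ring
  have h1 : omg p (f v0) ≠ 1 := fun h => h0 ((omg_eq_one_iff p _).mp h)
  by_contra hS
  have h2 : (omg p (f v0) - 1) * ∑ v : V, omg p (f v) = 0 := by
    linear_combination -key
  rcases mul_eq_zero.mp h2 with h | h
  · exact h1 (sub_eq_zero.mp h)
  · exact hS h

lemma eq_zero_of_omg_mul_self {a : ZMod p} {b : ℂ} (h : omg p a * b = b) (ha : a ≠ 0) :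
    b = 0 := by
  have h1 : omg p a ≠ 1 := fun h' => ha ((omg_eq_one_iff p a).mp h')
  have h2 : (omg p a - 1) * b = 0 := by linear_combination h
  rcases mul_eq_zero.mp h2 with h' | h'
  · exact absurd (sub_eq_zero.mp h') h1
  · exact h'

end OmgAux

lemma sep_lemma (p n : ℕ) [Fact p.Prime] (F : Type) [Field F] [Fintype F] [Algebra (ZMod p) F]
    (C : Submodule F (Fin n → F)) (x : Fin n → F) (hx : x ∉ C) :
    ∃ d : Fin n → F, (∀ y ∈ C, d ⬝ᵥ y = 0) ∧ Algebra.trace (ZMod p) F (d ⬝ᵥ x) ≠ 0 := by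
  have hxq : C.mkQ x ≠ 0 := by
    simpa [Submodule.Quotient.mk_eq_zero] using hx
  obtain ⟨g, hg⟩ : ∃ g : Module.Dual F ((Fin n → F) ⧸ C), g (C.mkQ x) ≠ 0 := by
    by_contra h
    push_neg at h
    exact hxq ((Module.forall_dual_apply_eq_zero_iff F _).mp h)
  set f : (Fin n → F) →ₗ[F] F := g.comp C.mkQ with hf
  have hfC : ∀ y ∈ C, f y = 0 := by
    intro y hy
    simp [hf, (Submodule.Quotient.mk_eq_zero C).mpr hy, Submodule.mkQ_apply]
  have hfx : f x ≠ 0 := hg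
  obtain ⟨lam, hlam⟩ : ∃ lam : F, Algebra.trace (ZMod p) F (lam * f x) ≠ 0 := by
    by_contra h
    push_neg at h
    refine hfx ((traceForm_nondegenerate (ZMod p) F).1 (f x) fun y => ?_)
    rw [Algebra.traceForm_apply, mul_comm]
    exact h y
  have key : ∀ y : Fin n → F,
      (fun i => lam * f (fun j => if i = j then 1 else 0)) ⬝ᵥ y = lam * f y := by
    intro y
    conv_rhs => rw [LinearMap.pi_apply_eq_sum_univ f y]
    rw [dotProduct, Finset.mul_sum]
    refine Finset.sum_congr rfl fun i _ => ?_
    simp [smul_eq_mul]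
    ring
  refine ⟨fun i => lam * f (fun j => if i = j then 1 else 0), fun y hy => ?_, ?_⟩
  · rw [key, hfC y hy, mul_zero]
  · rw [key]; exact hlam

/-- `span{Φ_Λ : Λ ∈ D}` equals the joint fixed space of the operators
`X(c_1,…,c_m)Z(d_1,…,d_m)` with `(c_1,…,c_m) ∈ ⋂_{Λ∈D} ker F_Λ` and `d_i ∈ C^⊥`;
in particular it is a stabilizer code. -/
theorem stmt_7 (p r n k m s : ℕ) [Fact p.Prime] (hr : 0 < r) (hk1 : 1 ≤ k) (hkn : k < n)
    (hs1 : 1 ≤ s) (hsm : s < m)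
    (F K : Type) [Field F] [Fintype F] [Algebra (ZMod p) F] (hF : Fintype.card F = p ^ r)
    [Field K] [Fintype K] [Algebra (ZMod p) K] (hK : Fintype.card K = (p ^ r) ^ k)
    (C : Submodule F (Fin n → F)) (hC : Module.finrank F C = k)
    (κ : K ≃ₗ[ZMod p] (↥C →ₗ[ZMod p] ZMod p))
    (D : Submodule K (Fin m → K)) (hD : Module.finrank K ↥D = s)
    (Φ : (Fin m → K) → (Fin m → Fin n → F) → ℂ)
    (hΦ : ∀ Λ x, Φ Λ x = ∏ i : Fin m,
      (if hx : x i ∈ C then (Real.sqrt ((p ^ r) ^ k))⁻¹ * omg p (κ (Λ i) ⟨x i, hx⟩) else 0)) :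
    (Submodule.span ℂ (Φ '' (D : Set (Fin m → K))) : Set ((Fin m → Fin n → F) → ℂ))
      = {v : (Fin m → Fin n → F) → ℂ |
          ∀ (c : Fin m → ↥C) (d : Fin m → Fin n → F),
            (∀ Λ ∈ D, ∑ i : Fin m, κ (Λ i) (c i) = 0) →
            (∀ i : Fin m, ∀ y ∈ C, d i ⬝ᵥ y = 0) →
            ∀ x : Fin m → Fin n → F,
              omg p (Algebra.trace (ZMod p) F
                  (∑ i : Fin m, d i ⬝ᵥ (x i - (c i : Fin n → F))))
                * v (fun i => x i - (c i : Fin n → F)) = v x} := by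
  haveI : Fintype ↥C := Fintype.ofFinite _
  haveI : Fintype ↥D := Fintype.ofFinite _
  set sq : ℂ := ((((Real.sqrt (((p : ℝ) ^ r) ^ k))⁻¹ : ℝ) : ℂ)) with hsqdef
  have hsq_ne : sq ≠ 0 := by
    have hp0 : (0 : ℝ) < (p : ℝ) := by exact_mod_cast (Fact.out : p.Prime).pos
    have hpos : (0 : ℝ) < ((p : ℝ) ^ r) ^ k := by positivity
    simp only [hsqdef, ne_eq, Complex.ofReal_eq_zero, inv_eq_zero]
    exact ne_of_gt (Real.sqrt_pos.mpr hpos)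
  -- product formula, supported case
  have Φ_eq : ∀ (Λ : Fin m → K) (x : Fin m → Fin n → F) (h : ∀ i, x i ∈ C),
      Φ Λ x = sq ^ m * omg p (∑ i : Fin m, κ (Λ i) ⟨x i, h i⟩) := by
    intro Λ x h
    rw [hΦ, omg_sum]
    rw [Finset.prod_congr rfl (fun i _ => dif_pos (h i))]
    rw [Finset.prod_mul_distrib, Finset.prod_const, Finset.card_univ, Fintype.card_fin]
  have Φ_zero : ∀ (Λ : Fin m → K) (x : Fin m → Fin n → F), (¬ ∀ i, x i ∈ C) → Φ Λ x = 0 := by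
    intro Λ x h
    push_neg at h
    obtain ⟨j, hj⟩ := h
    rw [hΦ]
    exact Finset.prod_eq_zero (Finset.mem_univ j) (dif_neg hj)
  ext v
  simp only [SetLike.mem_coe, Set.mem_setOf_eq]
  constructor
  · -- span ⊆ fixed space
    intro hv
    induction hv using Submodule.span_induction with
    | mem w hw =>
      obtain ⟨Λ, hΛD, rfl⟩ := hw
      intro c d hc hd x
      by_cases hx : ∀ i, x i ∈ C
      · have hxc : ∀ i, x i - (c i : Fin n → F) ∈ C := fun i => sub_mem (hx i) (c i).2
        have htr : (∑ i : Fin m, d i ⬝ᵥ (x i - (c i : Fin n → F))) = 0 :=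
          Finset.sum_eq_zero fun i _ => hd i _ (hxc i)
        rw [htr, map_zero, omg_zero, one_mul]
        rw [Φ_eq Λ _ hxc, Φ_eq Λ x hx]
        congr 1
        have : ∀ i, (⟨x i - (c i : Fin n → F), hxc i⟩ : ↥C) = ⟨x i, hx i⟩ - c i := by
          intro i; ext; simp
        congr 1
        calc (∑ i : Fin m, κ (Λ i) ⟨x i - (c i : Fin n → F), hxc i⟩)
            = ∑ i : Fin m, (κ (Λ i) ⟨x i, hx i⟩ - κ (Λ i) (c i)) := by
              refine Finset.sum_congr rfl fun i _ => ?_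
              rw [this i, map_sub]
          _ = (∑ i : Fin m, κ (Λ i) ⟨x i, hx i⟩) - ∑ i : Fin m, κ (Λ i) (c i) := by
              rw [Finset.sum_sub_distrib]
          _ = ∑ i : Fin m, κ (Λ i) ⟨x i, hx i⟩ := by rw [hc Λ hΛD, sub_zero]
      · have hx' : ¬ ∀ i, x i - (c i : Fin n → F) ∈ C := by
          intro h
          refine hx fun i => ?_
          have := add_mem (h i) (c i).2
          simpa using this
        rw [Φ_zero Λ _ hx', Φ_zero Λ x hx, mul_zero]
    | zero => intro c d hc hd x; simp
    | add w₁ w₂ h₁ h₂ ih₁ ih₂ =>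
      intro c d hc hd x
      simp only [Pi.add_apply, mul_add]
      rw [ih₁ c d hc hd x, ih₂ c d hc hd x]
    | smul a w h ih =>
      intro c d hc hd x
      simp only [Pi.smul_apply, smul_eq_mul]
      rw [mul_left_comm, ih c d hc hd x]
  · -- fixed space ⊆ span
    intro hv
    -- support on C^m
    have hsupp : ∀ x : Fin m → Fin n → F, (¬ ∀ i, x i ∈ C) → v x = 0 := by
      intro x hx
      push_neg at hx
      obtain ⟨j, hj⟩ := hx
      obtain ⟨d0, hd0C, hd0x⟩ := sep_lemma p n F C (x j) hj
      set d : Fin m → Fin n → F := fun i => if i = j then d0 else 0 with hd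
      have h1 := hv 0 d (fun Λ _ => by simp) (fun i y hy => by
        by_cases h : i = j
        · subst h; simpa [hd] using hd0C y hy
        · simp [hd, h]) x
      have h2 : (fun i => x i - ((0 : Fin m → ↥C) i : Fin n → F)) = x := by
        funext i; simp
      rw [h2] at h1
      have h3 : (∑ i : Fin m, d i ⬝ᵥ (x i - ((0 : Fin m → ↥C) i : Fin n → F))) = d0 ⬝ᵥ x j := by
        rw [Finset.sum_eq_single j]
        · simp [hd]
        · intro i _ hij; simp [hd, hij]
        · intro h; exact absurd (Finset.mem_univ j) h
      rw [h3] at h1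
      exact eq_zero_of_omg_mul_self p h1 hd0x
    -- translation invariance
    have hinv : ∀ (c : Fin m → ↥C), (∀ Λ ∈ D, ∑ i : Fin m, κ (Λ i) (c i) = 0) →
        ∀ x, v (fun i => x i - (c i : Fin n → F)) = v x := by
      intro c hc x
      have h1 := hv c 0 hc (fun i y _ => zero_dotProduct y) x
      simpa [omg_zero] using h1
    -- Fourier reconstruction
    set G : (Fin m → K) → (Fin m → ↥C) → ZMod p := fun Λ y => ∑ i : Fin m, κ (Λ i) (y i)
      with hG
    set T : Finset (Fin m → ↥C) :=
      Finset.univ.filter (fun t => ∀ Λ ∈ D, G Λ t = 0) with hT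
    have hT0 : (0 : Fin m → ↥C) ∈ T := by
      simp only [hT, Finset.mem_filter, Finset.mem_univ, true_and]
      intro Λ _; simp [hG]
    have hTne : (T.card : ℂ) ≠ 0 :=
      Nat.cast_ne_zero.mpr (Finset.card_pos.mpr ⟨0, hT0⟩).ne'
    have hDcard : (Fintype.card ↥D : ℂ) ≠ 0 :=
      Nat.cast_ne_zero.mpr (Fintype.card_pos_iff.mpr ⟨(0 : ↥D)⟩).ne'
    set c0 : ℂ := sq ^ m * (Fintype.card ↥D : ℂ) * (T.card : ℂ) with hc0
    have hc0_ne : c0 ≠ 0 := by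
      simp only [hc0]
      exact mul_ne_zero (mul_ne_zero (pow_ne_zero m hsq_ne) hDcard) hTne
    -- character orthogonality over D
    have char : ∀ z : Fin m → ↥C,
        (∑ Λ : ↥D, omg p (G Λ.1 z)) =
          if (∀ Λ ∈ D, G Λ z = 0) then (Fintype.card ↥D : ℂ) else 0 := by
      intro z
      by_cases hz : ∀ Λ ∈ D, G Λ z = 0
      · rw [if_pos hz]
        rw [Finset.sum_congr rfl (fun Λ _ => by rw [hz Λ.1 Λ.2, omg_zero])]
        simp
      · rw [if_neg hz]
        push_neg at hz
        obtain ⟨Λ0, hΛ0D, hΛ0⟩ := hz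
        refine sum_omg_eq_zero p (fun Λ : ↥D => G Λ.1 z) ?_ ⟨Λ0, hΛ0D⟩ hΛ0
        intro a b
        simp only [hG, Submodule.coe_add, Pi.add_apply, map_add, LinearMap.add_apply]
        rw [Finset.sum_add_distrib]
    have hvspan : v = ∑ Λ : ↥D, (c0⁻¹ *
        ∑ y : Fin m → ↥C, v (fun i => (y i : Fin n → F)) * omg p (- G Λ.1 y)) • Φ Λ.1 := by
      funext x
      rw [Finset.sum_apply]
      by_cases hx : ∀ i, x i ∈ C
      · set xh : Fin m → ↥C := fun i => ⟨x i, hx i⟩ with hxh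
        have step1 : ∀ Λ : ↥D, ((c0⁻¹ *
              ∑ y : Fin m → ↥C, v (fun i => (y i : Fin n → F)) * omg p (- G Λ.1 y)) • Φ Λ.1) x
            = c0⁻¹ * sq ^ m * ∑ y : Fin m → ↥C,
                v (fun i => (y i : Fin n → F)) * omg p (G Λ.1 (xh - y)) := by
          intro Λ
          have hGx : (∑ i : Fin m, κ (Λ.1 i) ⟨x i, hx i⟩) = G Λ.1 xh := rfl
          rw [Pi.smul_apply, smul_eq_mul, Φ_eq Λ.1 x hx, hGx]
          have key : ∀ y : Fin m → ↥C,
              v (fun i => (y i : Fin n → F)) * omg p (G Λ.1 (xh - y))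
              = (v (fun i => (y i : Fin n → F)) * omg p (- G Λ.1 y)) * omg p (G Λ.1 xh) := by
            intro y
            rw [mul_assoc, ← omg_add]
            congr 2
            simp only [hG]
            rw [← Finset.sum_neg_distrib, ← Finset.sum_add_distrib]
            refine Finset.sum_congr rfl fun i _ => ?_
            have h1 : (xh - y) i = xh i - y i := rfl
            rw [h1, map_sub]
            ring
          rw [Finset.sum_congr rfl (fun y _ => key y), ← Finset.sum_mul]
          ring
        rw [Finset.sum_congr rfl (fun Λ _ => step1 Λ)]
        rw [← Finset.mul_sum, Finset.sum_comm]
        have step2 : ∀ y : Fin m → ↥C,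
            (∑ Λ : ↥D, v (fun i => (y i : Fin n → F)) * omg p (G Λ.1 (xh - y)))
            = v (fun i => (y i : Fin n → F)) *
                (if (∀ Λ ∈ D, G Λ (xh - y) = 0) then (Fintype.card ↥D : ℂ) else 0) := by
          intro y
          rw [← Finset.mul_sum, char (xh - y)]
        rw [Finset.sum_congr rfl (fun y _ => step2 y)]
        -- reindex y := xh - t
        rw [← Equiv.sum_comp (Equiv.subLeft xh) (fun y => v (fun i => (y i : Fin n → F)) *
              (if (∀ Λ ∈ D, G Λ (xh - y) = 0) then (Fintype.card ↥D : ℂ) else 0))]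
        have step3 : ∀ t : Fin m → ↥C,
            (v (fun i => ((Equiv.subLeft xh t) i : Fin n → F)) *
              (if (∀ Λ ∈ D, G Λ (xh - Equiv.subLeft xh t) = 0)
                then (Fintype.card ↥D : ℂ) else 0))
            = (if (∀ Λ ∈ D, G Λ t = 0) then v x * (Fintype.card ↥D : ℂ) else 0) := by
          intro t
          have he : xh - Equiv.subLeft xh t = t := by
            simp [Equiv.subLeft]
          rw [he]
          by_cases ht : ∀ Λ ∈ D, G Λ t = 0
          · rw [if_pos ht, if_pos ht]
            congr 1
            have : (fun i => ((Equiv.subLeft xh t) i : Fin n → F))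
                = (fun i => x i - ((t i : Fin n → F))) := by
              funext i
              simp [Equiv.subLeft, hxh]
            rw [this]
            exact hinv t ht x
          · rw [if_neg ht, if_neg ht, mul_zero]
        rw [Finset.sum_congr rfl (fun t _ => step3 t)]
        rw [Finset.sum_ite, Finset.sum_const, Finset.sum_const_zero, add_zero]
        have : (Finset.univ.filter (fun t : Fin m → ↥C => ∀ Λ ∈ D, G Λ t = 0)) = T := rfl
        rw [this, nsmul_eq_mul]
        rw [hc0]
        field_simp
      · have h0 : ∀ Λ : ↥D, ((c0⁻¹ *
              ∑ y : Fin m → ↥C, v (fun i => (y i : Fin n → F)) * omg p (- G Λ.1 y)) • Φ Λ.1) x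
              = 0 := by
          intro Λ
          rw [Pi.smul_apply, smul_eq_mul, Φ_zero Λ.1 x hx, mul_zero]
        rw [Finset.sum_congr rfl (fun Λ _ => h0 Λ), Finset.sum_const_zero, hsupp x hx]
    rw [hvspan]
    exact Submodule.sum_mem _ fun Λ _ =>
      Submodule.smul_mem _ _ (Submodule.subset_span ⟨Λ.1, Λ.2, rfl⟩)
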